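/- For the genotype space G = {000, 011, 100, 101, 110, 111} ⊆ {0,1}^3, the two linear forms x = w_{100} + w_{111} − w_{101} − w_{110} and y = w_{000} + w_{111} − w_{011} − w_{100} vanish on every landscape w : G → ℝ that extends to an affine-linear function on ℝ^3, and together they span the space of all linear forms on ℝ^G vanishing on such landscapes (which has dimension 2 = |G| − dim Π_G − 1). -/

import Mathlib

/-- The linear form `x = w₁₀₀ + w₁₁₁ − w₁₀₁ − w₁₁₀`, with genotypes ordered
`000, 011, 100, 101, 110, 111`. -/
noncomputable def proj6 (i : Fin 6) : Module.Dual ℝ (Fin 6 → ℝ) :=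
  LinearMap.proj i

noncomputable def Xform : Module.Dual ℝ (Fin 6 → ℝ) :=
  proj6 2 + proj6 5 - proj6 3 - proj6 4

/-- The linear form `y = w₀₀₀ + w₁₁₁ − w₀₁₁ − w₁₀₀`. -/
noncomputable def Yform : Module.Dual ℝ (Fin 6 → ℝ) :=
  proj6 0 + proj6 5 - proj6 1 - proj6 2

/-- For `G = {000, 011, 100, 101, 110, 111}`, the forms `x` and `y` vanish on every
affine-linear landscape, and they span the space of all linear forms vanishing on such
landscapes, which is 2-dimensional. -/
theorem stmt14 :
    let gs : Fin 6 → Fin 3 → ℝ :=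
      ![![0,0,0], ![0,1,1], ![1,0,0], ![1,0,1], ![1,1,0], ![1,1,1]]
    let L : Set (Fin 6 → ℝ) :=
      {w | ∃ (a : Fin 3 → ℝ) (b : ℝ), ∀ k, w k = (∑ i, a i * gs k i) + b}
    (∀ w ∈ L, Xform w = 0 ∧ Yform w = 0) ∧
    (∀ φ : Module.Dual ℝ (Fin 6 → ℝ), (∀ w ∈ L, φ w = 0) →
      φ ∈ Submodule.span ℝ ({Xform, Yform} : Set (Module.Dual ℝ (Fin 6 → ℝ)))) ∧
    Module.finrank ℝ
      (Submodule.span ℝ ({Xform, Yform} : Set (Module.Dual ℝ (Fin 6 → ℝ)))) = 2 := by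
  intro gs L
  have hg0 : gs 0 = ![0,0,0] := rfl
  have hg1 : gs 1 = ![0,1,1] := rfl
  have hg2 : gs 2 = ![1,0,0] := rfl
  have hg3 : gs 3 = ![1,0,1] := rfl
  have hg4 : gs 4 = ![1,1,0] := rfl
  have hg5 : gs 5 = ![1,1,1] := rfl
  refine ⟨?_, ?_, ?_⟩
  · rintro w ⟨a, b, hw⟩
    constructor <;>
    · simp only [Xform, Yform, proj6, LinearMap.sub_apply, LinearMap.add_apply,
        LinearMap.proj_apply, hw, Fin.sum_univ_three, hg0, hg1, hg2, hg3, hg4, hg5,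
        Matrix.cons_val_two, Matrix.head_cons, Matrix.tail_cons]
      norm_num
      ring
  · intro φ hφ
    have h1 : (fun _ => (1:ℝ)) ∈ L := ⟨0, 1, by intro k; simp⟩
    have h2 : (fun k => gs k 0) ∈ L := ⟨![1,0,0], 0, by
      intro k; fin_cases k <;>
        simp [Fin.sum_univ_three, hg0, hg1, hg2, hg3, hg4, hg5]⟩
    have h3 : (fun k => gs k 1) ∈ L := ⟨![0,1,0], 0, by
      intro k; fin_cases k <;>
        simp [Fin.sum_univ_three, hg0, hg1, hg2, hg3, hg4, hg5]⟩
    have h4 : (fun k => gs k 2) ∈ L := ⟨![0,0,1], 0, by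
      intro k; fin_cases k <;>
        simp [Fin.sum_univ_three, hg0, hg1, hg2, hg3, hg4, hg5]⟩
    set c : Fin 6 → ℝ := fun i => φ (Pi.single i 1) with hc
    have hdecomp : ∀ w : Fin 6 → ℝ, φ w = ∑ i, w i * c i := by
      intro w
      have hw : w = ∑ i : Fin 6, w i • (Pi.single i 1 : Fin 6 → ℝ) := by
        funext j
        simp [Finset.sum_apply, Pi.single_apply]
      conv_lhs => rw [hw]
      rw [map_sum]
      simp [hc, smul_eq_mul]
    have e1 := hφ _ h1
    have e2 := hφ _ h2
    have e3 := hφ _ h3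
    have e4 := hφ _ h4
    rw [hdecomp] at e1 e2 e3 e4
    simp only [Fin.sum_univ_six, hg0, hg1, hg2, hg3, hg4, hg5, Matrix.cons_val_two,
      Matrix.head_cons, Matrix.tail_cons] at e1 e2 e3 e4
    norm_num at e1 e2 e3 e4
    -- e1 : c0+c1+c2+c3+c4+c5 = 0, e2 : c2+c3+c4+c5 = 0,
    -- e3 : c1+c4+c5 = 0, e4 : c1+c3+c5 = 0
    have d1 : c 1 + c 0 = 0 := by linarith
    have d2 : c 2 - c 5 + 2 * c 0 = 0 := by linarith
    have d3 : c 3 - c 0 + c 5 = 0 := by linarith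
    have d4 : c 4 - c 0 + c 5 = 0 := by linarith
    rw [Submodule.mem_span_pair]
    refine ⟨c 5 - c 0, c 0, ?_⟩
    apply LinearMap.ext
    intro w
    rw [hdecomp w, Fin.sum_univ_six]
    simp only [LinearMap.add_apply, LinearMap.smul_apply, Xform, Yform, proj6,
      LinearMap.sub_apply, LinearMap.proj_apply, smul_eq_mul]
    linear_combination (-(w 1)) * d1 - w 2 * d2 - w 3 * d3 - w 4 * d4
  · have hli : LinearIndependent ℝ ![Xform, Yform] := by
      rw [LinearIndependent.pair_iff]
      intro s t hst
      have hA := LinearMap.congr_fun hst (Pi.single (0 : Fin 6) 1)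
      have hB := LinearMap.congr_fun hst (Pi.single (2 : Fin 6) 1)
      simp [Xform, Yform, proj6, Pi.single_apply] at hA hB
      constructor <;> linarith
    have hset : ({Xform, Yform} : Set (Module.Dual ℝ (Fin 6 → ℝ)))
        = Set.range ![Xform, Yform] := by
      ext f
      simp only [Set.mem_insert_iff, Set.mem_singleton_iff, Set.mem_range, Fin.exists_fin_two]
      constructor
      · rintro (h | h) <;> simp [h]
      · rintro (h | h) <;> rw [← h] <;> simp
    rw [hset, finrank_span_eq_card hli]
    simp
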